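/- Let p be prime, m, l ≥ 1, and let b_j: ℤ/p^lℤ → {0,1,…,p−1} ⊆ ℤ/p^lℤ be the j-th digit map in base p (so that x = Σ_j b_j(x) p^j). If P: X → ℤ/p^mℤ is a polynomial of degree < d with respect to a measure-preserving action of an abelian group on X (meaning the d-fold additive derivative vanishes), then for each 0 ≤ j ≤ m−1 the composition b_j ∘ P (viewed with values in ℤ/p^lℤ) is a polynomial of degree < C for some constant C depending only on l, d, p, j. -/

import Mathlib

open MeasureTheory

/-- The additive derivative of `F` with respect to a transformation `S`. -/
def addDeriv {X A : Type*} [SubtractionMonoid A] (S : X → X) (F : X → A) : X → A :=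
  fun x => F (S x) - F x

namespace DigitPoly

variable {X : Type*} {Γ : Type*}

/-- Iterated additive derivative along a list of group elements. -/
def DL {M : Type*} [SubtractionMonoid M] (T : Γ → X → X) (l : List Γ) (F : X → M) : X → M :=
  l.foldr (fun g G => addDeriv (T g) G) F

section Basic

variable {M M' : Type*} [AddCommGroup M] [AddCommGroup M'] (T : Γ → X → X)

@[simp] lemma DL_nil (F : X → M) : DL T [] F = F := rfl

lemma DL_cons (g : Γ) (l : List Γ) (F : X → M) :
    DL T (g :: l) F = addDeriv (T g) (DL T l F) := rfl

lemma DL_append (l₁ l₂ : List Γ) (F : X → M) :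
    DL T (l₁ ++ l₂) F = DL T l₁ (DL T l₂ F) := by
  simp [DL, List.foldr_append]

lemma foldr_map_eq_DL (l : List Γ) (F : X → M) :
    ((l.map T).foldr addDeriv F) = DL T l F := by
  rw [List.foldr_map]; rfl

variable [AddCommGroup Γ]

lemma Tcomm (hTadd : ∀ g h : Γ, T (g + h) = T g ∘ T h) (g h : Γ) (x : X) :
    T g (T h x) = T h (T g x) := by
  have h1 := congrFun (hTadd g h) x
  have h2 := congrFun (hTadd h g) x
  simp only [Function.comp_apply] at h1 h2
  rw [← h1, ← h2, add_comm]

lemma addDeriv_comm (hTadd : ∀ g h : Γ, T (g + h) = T g ∘ T h) (g h : Γ) (F : X → M) :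
    addDeriv (T g) (addDeriv (T h) F) = addDeriv (T h) (addDeriv (T g) F) := by
  funext x
  simp only [addDeriv]
  rw [Tcomm T hTadd g h x]
  abel

lemma DL_addDeriv (hTadd : ∀ g h : Γ, T (g + h) = T g ∘ T h) (l : List Γ) (g : Γ) (F : X → M) :
    DL T l (addDeriv (T g) F) = addDeriv (T g) (DL T l F) := by
  induction l with
  | nil => rfl
  | cons h t ih => rw [DL_cons, ih, DL_cons, addDeriv_comm T hTadd]

lemma DL_comp (hTadd : ∀ g h : Γ, T (g + h) = T g ∘ T h) (l : List Γ) (s : Γ) (F : X → M) :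
    DL T l (fun x => F (T s x)) = fun x => DL T l F (T s x) := by
  induction l with
  | nil => rfl
  | cons h t ih =>
    rw [DL_cons, ih, DL_cons]
    funext x
    simp only [addDeriv]
    rw [Tcomm T hTadd s h x]

lemma DL_add (l : List Γ) (F G : X → M) :
    DL T l (fun x => F x + G x) = fun x => DL T l F x + DL T l G x := by
  induction l with
  | nil => rfl
  | cons h t ih =>
    rw [DL_cons, ih, DL_cons, DL_cons]
    funext x
    simp only [addDeriv]
    abel

lemma DL_sub (l : List Γ) (F G : X → M) :
    DL T l (fun x => F x - G x) = fun x => DL T l F x - DL T l G x := by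
  induction l with
  | nil => rfl
  | cons h t ih =>
    rw [DL_cons, ih, DL_cons, DL_cons]
    funext x
    simp only [addDeriv]
    abel

lemma DL_zero (l : List Γ) : DL T l (fun _ => (0 : M)) = fun _ => 0 := by
  induction l with
  | nil => rfl
  | cons h t ih =>
    rw [DL_cons, ih]
    funext x
    simp [addDeriv]

lemma DL_hom (l : List Γ) (π : M → M') (hπ : ∀ a b : M, π (a - b) = π a - π b)
    (F : X → M) : DL T l (fun x => π (F x)) = fun x => π (DL T l F x) := by
  induction l with
  | nil => rfl
  | cons h t ih =>
    rw [DL_cons, ih, DL_cons]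
    funext x
    simp only [addDeriv]
    rw [hπ]

lemma DL_congr {E : Set X} (hE : ∀ (g : Γ) (x : X), x ∈ E → T g x ∈ E)
    (l : List Γ) {F G : X → M} (hFG : ∀ x ∈ E, F x = G x) :
    ∀ x ∈ E, DL T l F x = DL T l G x := by
  induction l with
  | nil => exact hFG
  | cons h t ih =>
    intro x hx
    rw [DL_cons, DL_cons]
    simp only [addDeriv]
    rw [ih x hx, ih (T h x) (hE h x hx)]

lemma DL_perm (hTadd : ∀ g h : Γ, T (g + h) = T g ∘ T h) {l₁ l₂ : List Γ} (hp : l₁.Perm l₂) (F : X → M) :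
    DL T l₁ F = DL T l₂ F := by
  induction hp with
  | nil => rfl
  | cons g _ ih => rw [DL_cons, DL_cons, ih]
  | swap g h t => rw [DL_cons, DL_cons, DL_cons, DL_cons, addDeriv_comm T hTadd]
  | trans _ _ ih₁ ih₂ => rw [ih₁, ih₂]

end Basic

/-- `F` is a polynomial of degree `< k` on the invariant set `E`. -/
def Pl {M : Type*} [SubtractionMonoid M] (T : Γ → X → X) (E : Set X) (k : ℕ)
    (F : X → M) : Prop :=
  ∀ l : List Γ, l.length = k → ∀ x ∈ E, DL T l F x = 0

section PlLemmas

variable {M : Type*} [AddCommGroup M] [AddCommGroup Γ] {T : Γ → X → X} {E : Set X}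

lemma Pl_of_eqOn_zero (hE : ∀ (g : Γ) (x : X), x ∈ E → T g x ∈ E) {F : X → M} (h0 : ∀ x ∈ E, F x = 0) (k : ℕ) : Pl T E k F := by
  intro l _ x hx
  have := DL_congr T hE l (G := fun _ => (0 : M)) h0 x hx
  rwa [DL_zero T l] at this

lemma Pl_zero_fn (k : ℕ) : Pl T E k (fun _ => (0 : M)) := by
  intro l _ x _
  rw [DL_zero T l]

lemma Pl_succ (hTadd : ∀ g h : Γ, T (g + h) = T g ∘ T h) {F : X → M} {k : ℕ} (h : ∀ g : Γ, Pl T E k (addDeriv (T g) F)) :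
    Pl T E (k + 1) F := by
  intro l hl x hx
  cases l with
  | nil => simp at hl
  | cons g t =>
    rw [DL_cons, ← DL_addDeriv T hTadd]
    exact h g t (by simpa using hl) x hx

lemma Pl_deriv {F : X → M} {k : ℕ} (h : Pl T E (k + 1) F) (g : Γ) :
    Pl T E k (addDeriv (T g) F) := by
  intro l hl x hx
  have := h (l ++ [g]) (by simp [hl]) x hx
  rwa [DL_append] at this

lemma Pl_comp (hTadd : ∀ g h : Γ, T (g + h) = T g ∘ T h) (hE : ∀ (g : Γ) (x : X), x ∈ E → T g x ∈ E) {F : X → M} {k : ℕ} (h : Pl T E k F) (g : Γ) :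
    Pl T E k (fun x => F (T g x)) := by
  intro l hl x hx
  rw [DL_comp T hTadd]
  exact h l hl _ (hE g x hx)

lemma Pl_step (hTadd : ∀ g h : Γ, T (g + h) = T g ∘ T h) (hE : ∀ (g : Γ) (x : X), x ∈ E → T g x ∈ E) {F : X → M} {k : ℕ} (h : Pl T E k F) : Pl T E (k + 1) F := by
  apply Pl_succ hTadd
  intro g l hl x hx
  have hrw : addDeriv (T g) F = fun x => F (T g x) - F x := rfl
  rw [hrw, DL_sub, DL_comp T hTadd]
  show DL T l F (T g x) - DL T l F x = 0
  rw [h l hl x hx, h l hl _ (hE g x hx), sub_self]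

lemma Pl_mono (hTadd : ∀ g h : Γ, T (g + h) = T g ∘ T h) (hE : ∀ (g : Γ) (x : X), x ∈ E → T g x ∈ E) {F : X → M} {k k' : ℕ} (h : Pl T E k F) (hk : k ≤ k') : Pl T E k' F := by
  induction k' with
  | zero =>
    have : k = 0 := by omega
    subst this; exact h
  | succ n ih =>
    rcases Nat.lt_or_ge k (n+1) with h1 | h1
    · exact Pl_step hTadd hE (ih (by omega))
    · have : k = n + 1 := by omega
      subst this; exact h

lemma Pl_add {F G : X → M} {k : ℕ} (hF : Pl T E k F) (hG : Pl T E k G) :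
    Pl T E k (fun x => F x + G x) := by
  intro l hl x hx
  have := congrFun (DL_add T l F G) x
  rw [this, hF l hl x hx, hG l hl x hx, add_zero]

lemma Pl_sum {ι : Type*} (s : Finset ι) (F : ι → X → M) {k : ℕ}
    (h : ∀ i ∈ s, Pl T E k (F i)) :
    Pl T E k (fun x => ∑ i ∈ s, F i x) := by
  classical
  induction s using Finset.induction_on with
  | empty => simpa using Pl_zero_fn (T := T) (E := E) k
  | insert a s ha ih =>
    simp only [Finset.sum_insert ha]
    exact Pl_add (h a (Finset.mem_insert_self a s))
      (ih fun i hi => h i (Finset.mem_insert_of_mem hi))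

end PlLemmas

section Mul

variable {M : Type*} [AddCommGroup Γ] {B : Type*} [CommRing B] {T : Γ → X → X} {E : Set X}

theorem Pl_mul (hTadd : ∀ g h : Γ, T (g + h) = T g ∘ T h)
    (hE : ∀ (g : Γ) (x : X), x ∈ E → T g x ∈ E) :
    ∀ (s t : ℕ) (u v : X → B), Pl T E (s + 1) u → Pl T E (t + 1) v →
      Pl T E (s + t + 1) (fun x => u x * v x)
  | s, t, u, v, hu, hv => by
    apply Pl_succ hTadd
    intro g
    have hrw : addDeriv (T g) (fun x => u x * v x) =
        fun x => (addDeriv (T g) u x) * v (T g x) + u x * (addDeriv (T g) v x) := by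
      funext x
      simp only [addDeriv]
      ring
    rw [hrw]
    apply Pl_add
    · cases s with
      | zero =>
        have h0 : ∀ x ∈ E, addDeriv (T g) u x = 0 := fun x hx => Pl_deriv hu g [] rfl x hx
        exact Pl_of_eqOn_zero hE (fun x hx => by rw [h0 x hx, zero_mul]) _
      | succ s' =>
        have h1 : Pl T E (s' + 1) (addDeriv (T g) u) := Pl_deriv hu g
        have h2 : Pl T E (t + 1) (fun x => v (T g x)) := Pl_comp hTadd hE hv g
        have h3 := Pl_mul hTadd hE s' t _ _ h1 h2
        exact Pl_mono hTadd hE h3 (by omega)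
    · cases t with
      | zero =>
        have h0 : ∀ x ∈ E, addDeriv (T g) v x = 0 := fun x hx => Pl_deriv hv g [] rfl x hx
        exact Pl_of_eqOn_zero hE (fun x hx => by rw [h0 x hx, mul_zero]) _
      | succ t' =>
        have h1 : Pl T E (t' + 1) (addDeriv (T g) v) := Pl_deriv hv g
        have h3 := Pl_mul hTadd hE s t' u _ hu h1
        exact Pl_mono hTadd hE h3 (by omega)
  termination_by s t => s + t

end Mul

section FiniteGroup

open fwdDiff in
lemma fwdDiff_iter_hom {A M M' : Type*} [AddCommMonoid A] [AddCommGroup M] [AddCommGroup M']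
    (π : M → M') (hπ : ∀ a b : M, π (a - b) = π a - π b) (α : A) (F : A → M) :
    ∀ e : ℕ, (fwdDiff α)^[e] (fun y => π (F y)) = fun y => π ((fwdDiff α)^[e] F y)
  | 0 => rfl
  | (e+1) => by
    rw [Function.iterate_succ_apply, Function.iterate_succ_apply]
    have : fwdDiff α (fun y => π (F y)) = fun y => π (fwdDiff α F y) := by
      funext y
      simp only [fwdDiff]
      rw [hπ]
    rw [this, fwdDiff_iter_hom π hπ α (fwdDiff α F) e]

open fwdDiff in
lemma fwdDiff_iter_smul {A M : Type*} [AddCommMonoid A] [AddCommGroup M]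
    (c : ℤ) (α : A) (F : A → M) :
    ∀ e : ℕ, (fwdDiff α)^[e] (fun y => c • F y) = fun y => c • ((fwdDiff α)^[e] F y)
  | 0 => rfl
  | (e+1) => by
    rw [Function.iterate_succ_apply, Function.iterate_succ_apply]
    have : fwdDiff α (fun y => c • F y) = fun y => c • (fwdDiff α F y) := by
      funext y
      simp only [fwdDiff]
      rw [smul_sub]
    rw [this, fwdDiff_iter_smul c α (fwdDiff α F) e]

/-- Coefficients of the `p`-divided `p^n`-fold difference. -/
def dcoef (p n k : ℕ) : ℤ :=
  if k = 0 then (if Even (p ^ n) then 1 else 0)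
  else (-1) ^ (p ^ n - k) * (((p ^ n).choose k) / p : ℕ)

open Finset in
/-- Single-shift vanishing: for `f : ZMod (p^n) → ZMod (p^l)`, the `(p^n * l)`-fold
difference along any fixed shift vanishes. -/
theorem single_vanish (p : ℕ) (hp : p.Prime) (n : ℕ) :
    ∀ (l : ℕ) (f : ZMod (p ^ n) → ZMod (p ^ l)) (α : ZMod (p ^ n)),
      (fwdDiff α)^[p ^ n * l] f = 0
  | 0, f, α => by
    haveI : Subsingleton (ZMod (p ^ 0)) := by
      rw [pow_zero]
      infer_instance
    funext y
    exact Subsingleton.elim _ _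
  | (l + 1), f, α => by
    haveI : NeZero (p ^ n) := ⟨pow_ne_zero _ hp.ne_zero⟩
    have hN1 : 0 < p ^ n := pow_pos hp.pos n
    have hNα : (p ^ n : ℕ) • α = 0 := by
      rw [nsmul_eq_mul, ZMod.natCast_self, zero_mul]
    have key : (fwdDiff α)^[p ^ n] f =
        fun y => (p : ℤ) • (∑ k ∈ range (p ^ n), dcoef p n k • f (y + k • α)) := by
      funext y
      rw [fwdDiff_iter_eq_sum_shift, smul_sum]
      have hterm : ∀ k ∈ range (p ^ n), (p : ℤ) • (dcoef p n k • f (y + k • α)) =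
          ((-1 : ℤ) ^ (p ^ n - k) * (p ^ n).choose k) • f (y + k • α)
            + (if k = 0 then f y else 0) := by
        intro k hk
        have hkN : k < p ^ n := mem_range.mp hk
        by_cases hk0 : k = 0
        · subst hk0
          rw [if_pos rfl]
          rw [zero_smul, add_zero, Nat.sub_zero, Nat.choose_zero_right]
          rw [Nat.cast_one, mul_one]
          show (p : ℤ) • dcoef p n 0 • f y = (-1 : ℤ) ^ (p ^ n) • f y + f y
          rw [dcoef, if_pos rfl]
          rcases Nat.even_or_odd (p ^ n) with he | ho
          · have hp2 : p = 2 := hp.even_iff.mp (Nat.even_pow.mp he).1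
            rw [if_pos he, he.neg_one_pow]
            simp only [one_smul]
            rw [show ((p : ℕ) : ℤ) = 2 by exact_mod_cast hp2, two_smul]
          · rw [if_neg (by simpa [Nat.not_even_iff_odd] using ho), ho.neg_one_pow]
            rw [zero_smul, smul_zero, neg_one_smul, neg_add_cancel]
        · have hdvd : p ∣ (p ^ n).choose k :=
            Nat.Prime.dvd_choose_pow hp hk0 (by omega)
          rw [if_neg hk0, add_zero, dcoef, if_neg hk0]
          obtain ⟨q, hq⟩ := hdvd
          rw [hq, Nat.mul_div_cancel_left q hp.pos, smul_smul]
          congr 1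
          push_cast
          ring
      rw [sum_congr rfl hterm, sum_add_distrib, sum_ite_eq' (range (p ^ n)) 0]
      rw [if_pos (mem_range.mpr hN1), sum_range_succ]
      congr 1
      rw [hNα, add_zero, Nat.sub_self, pow_zero, Nat.choose_self, Nat.cast_one, mul_one, one_smul]
    have hsplit : (fwdDiff α)^[p ^ n * (l + 1)] f
        = (fwdDiff α)^[p ^ n * l] ((fwdDiff α)^[p ^ n] f) := by
      rw [← Function.iterate_add_apply]
      congr 1
    rw [hsplit, key, fwdDiff_iter_smul]
    set w := (fwdDiff α)^[p ^ n * l]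
      (fun y => ∑ k ∈ range (p ^ n), dcoef p n k • f (y + k • α)) with hw
    funext y
    show (p : ℤ) • w y = 0
    have hπ := single_vanish p hp n l
      (fun z => (ZMod.castHom (pow_dvd_pow p (Nat.le_succ l)) (ZMod (p ^ l)))
        (∑ k ∈ range (p ^ n), dcoef p n k • f (z + k • α))) α
    rw [fwdDiff_iter_hom _ (fun a b => RingHom.map_sub _ a b) α _ (p ^ n * l)] at hπ
    have hπy : (ZMod.castHom (pow_dvd_pow p (Nat.le_succ l)) (ZMod (p ^ l))) (w y) = 0 := by
      have := congrFun hπ y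
      simpa [hw] using this
    haveI : NeZero (p ^ (l + 1)) := ⟨pow_ne_zero _ hp.ne_zero⟩
    haveI : NeZero (p ^ l) := ⟨pow_ne_zero _ hp.ne_zero⟩
    have hval : ((w y).val : ZMod (p ^ l)) = 0 := by
      have h2 := hπy
      rw [ZMod.castHom_apply] at h2
      rw [ZMod.natCast_val]
      exact h2
    obtain ⟨c, hc⟩ := (ZMod.natCast_eq_zero_iff _ _).mp hval
    have hwy : w y = ((p ^ l * c : ℕ) : ZMod (p ^ (l + 1))) := by
      rw [← hc, ZMod.natCast_val, ZMod.cast_id]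
    rw [hwy]
    have h1 : (p : ℤ) • (((p ^ l * c : ℕ)) : ZMod (p ^ (l + 1)))
        = ((p ^ (l + 1) * c : ℕ) : ZMod (p ^ (l + 1))) := by
      rw [zsmul_eq_mul]
      push_cast
      ring
    rw [h1, Nat.cast_mul, ZMod.natCast_self, zero_mul]

lemma TA_add {A : Type*} [AddCommGroup A] (α β : A) :
    (fun y : A => y + (α + β)) = (fun y : A => y + α) ∘ (fun y : A => y + β) := by
  funext y
  show y + (α + β) = (y + β) + α
  rw [add_comm α β, ← add_assoc]

lemma TA_add' {A : Type*} [AddCommGroup A] :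
    ∀ α β : A, (fun (α : A) (y : A) => y + α) (α + β) =
      ((fun (α : A) (y : A) => y + α) α) ∘ ((fun (α : A) (y : A) => y + α) β) :=
  fun α β => TA_add α β

lemma DL_replicate {A M : Type*} [AddCommGroup A] [AddCommGroup M] (α : A) (f : A → M) :
    ∀ e : ℕ, DL (fun (α : A) (y : A) => y + α) (List.replicate e α) f = (fwdDiff α)^[e] f
  | 0 => rfl
  | (e + 1) => by
    rw [List.replicate_succ, DL_cons, DL_replicate α f e, Function.iterate_succ_apply']
    rfl

lemma exists_perm_replicate {A : Type*} [DecidableEq A] :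
    ∀ (e : ℕ) (l : List A) (α : A), e ≤ l.count α →
      ∃ t, l.Perm (List.replicate e α ++ t)
  | 0, l, α, _ => ⟨l, by simp⟩
  | (e + 1), l, α, h => by
    have hmem : α ∈ l := by
      have : 0 < l.count α := by omega
      exact List.count_pos_iff.mp this
    have h2 : e ≤ (l.erase α).count α := by
      rw [List.count_erase_self]
      omega
    obtain ⟨t, ht⟩ := exists_perm_replicate e (l.erase α) α h2
    refine ⟨t, ?_⟩
    have h1 : l.Perm (α :: l.erase α) := List.perm_cons_erase hmem
    have := h1.trans (ht.cons α)
    simpa [List.replicate_succ] using this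

open Finset in
theorem funcs_bounded (p : ℕ) (hp : p.Prime) (n l : ℕ) :
    ∀ f : ZMod (p ^ n) → ZMod (p ^ l),
      Pl (fun (α : ZMod (p ^ n)) (y : ZMod (p ^ n)) => y + α) Set.univ
        (p ^ n * (p ^ n * l) + 1) f := by
  classical
  haveI : NeZero (p ^ n) := ⟨pow_ne_zero _ hp.ne_zero⟩
  intro f lst hlen x _
  have hcard : ∃ α : ZMod (p ^ n), p ^ n * l ≤ lst.count α := by
    by_contra hcon
    push_neg at hcon
    have h1 : ∑ a ∈ (lst : Multiset (ZMod (p ^ n))).toFinset, (lst : Multiset _).count a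
        = Multiset.card (lst : Multiset (ZMod (p ^ n))) := Multiset.toFinset_sum_count_eq _
    have h2 : Multiset.card (lst : Multiset (ZMod (p ^ n))) = p ^ n * (p ^ n * l) + 1 := by
      simpa using hlen
    have h3 : ∑ a ∈ (lst : Multiset (ZMod (p ^ n))).toFinset, (lst : Multiset _).count a
        ≤ (lst : Multiset (ZMod (p ^ n))).toFinset.card • (p ^ n * l - 1) := by
      apply Finset.sum_le_card_nsmul
      intro a _
      have := hcon a
      rw [Multiset.coe_count]
      omega
    rw [smul_eq_mul] at h3
    have h4 : (lst : Multiset (ZMod (p ^ n))).toFinset.card ≤ p ^ n := by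
      have := Finset.card_le_univ (lst : Multiset (ZMod (p ^ n))).toFinset
      simpa [ZMod.card] using this
    have h5 : (lst : Multiset (ZMod (p ^ n))).toFinset.card * (p ^ n * l - 1)
        ≤ p ^ n * (p ^ n * l - 1) := Nat.mul_le_mul_right _ h4
    have h6 : p ^ n * (p ^ n * l - 1) ≤ p ^ n * (p ^ n * l) :=
      Nat.mul_le_mul_left _ (by omega)
    omega
  obtain ⟨α, hα⟩ := hcard
  obtain ⟨t, ht⟩ := exists_perm_replicate (p ^ n * l) lst α hα
  rw [DL_perm _ TA_add' ht f, DL_append, DL_replicate,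
    single_vanish p hp n l (DL (fun (α : ZMod (p ^ n)) (y : ZMod (p ^ n)) => y + α) t f) α]
  rfl

end FiniteGroup

/-- Degree bound for composition. -/
def cdeg (D0 : ℕ) : ℕ → ℕ → ℕ
  | 0, _ => 1
  | 1, _ => 1
  | _ + 2, 0 => 1
  | d + 2, D + 1 => cdeg D0 (d + 1) D0 + cdeg D0 (d + 2) D + 1
  termination_by d D => (d, D)

lemma cdeg_pos (D0 d D : ℕ) : 1 ≤ cdeg D0 d D := by
  match d, D with
  | 0, D => simp [cdeg]
  | 1, D => simp [cdeg]
  | d + 2, 0 => simp [cdeg]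
  | d + 2, D + 1 => rw [cdeg]; omega

section Comp

variable {X : Type*} {Γ : Type*} [AddCommGroup Γ]
variable {A : Type*} [AddCommGroup A] [Fintype A] [DecidableEq A]
variable {B : Type*} [CommRing B]

open Finset in
theorem comp_poly (T : Γ → X → X) (E : Set X)
    (hTadd : ∀ g h : Γ, T (g + h) = T g ∘ T h)
    (hE : ∀ (g : Γ) (x : X), x ∈ E → T g x ∈ E)
    (D0 : ℕ)
    (hD0 : ∀ f : A → B, Pl (fun (α : A) (y : A) => y + α) Set.univ D0 f) :
    ∀ (d D : ℕ) (f : A → B) (Q : X → A),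
      Pl (fun (α : A) (y : A) => y + α) Set.univ D f → Pl T E d Q →
      Pl T E (cdeg D0 d D) (fun x => f (Q x))
  | 0, D, f, Q, hf, hQ => by
    rw [show cdeg D0 0 D = 1 by rw [cdeg]]
    have hQ0 : ∀ x ∈ E, Q x = 0 := fun x hx => hQ [] rfl x hx
    apply Pl_succ hTadd
    intro g l hl x hx
    have hl0 : l = [] := List.length_eq_zero_iff.mp hl
    subst hl0
    show addDeriv (T g) (fun x => f (Q x)) x = 0
    show f (Q (T g x)) - f (Q x) = 0
    rw [hQ0 _ (hE g x hx), hQ0 x hx, sub_self]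
  | 1, D, f, Q, hf, hQ => by
    rw [show cdeg D0 1 D = 1 by rw [cdeg]]
    have hQ1 : ∀ (g : Γ), ∀ x ∈ E, Q (T g x) = Q x := by
      intro g x hx
      have := hQ [g] rfl x hx
      exact sub_eq_zero.mp this
    apply Pl_succ hTadd
    intro g l hl x hx
    have hl0 : l = [] := List.length_eq_zero_iff.mp hl
    subst hl0
    show f (Q (T g x)) - f (Q x) = 0
    rw [hQ1 g x hx, sub_self]
  | (d + 2), 0, f, Q, hf, hQ => by
    rw [show cdeg D0 (d + 2) 0 = 1 by rw [cdeg]]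
    have hf0 : ∀ y : A, f y = 0 := fun y => hf [] rfl y trivial
    exact Pl_of_eqOn_zero hE (fun x _ => hf0 (Q x)) 1
  | (d + 2), (D + 1), f, Q, hf, hQ => by
    have hcd : cdeg D0 (d + 2) (D + 1)
        = cdeg D0 (d + 1) D0 + cdeg D0 (d + 2) D + 1 := by rw [cdeg]
    rw [hcd]
    apply Pl_succ hTadd
    intro g
    have key : addDeriv (T g) (fun x => f (Q x)) =
        fun x => ∑ α : A, (if addDeriv (T g) Q x = α then (1 : B) else 0)
          * (f (Q x + α) - f (Q x)) := by
      funext x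
      simp only [ite_mul, one_mul, zero_mul]
      rw [Finset.sum_ite_eq univ (addDeriv (T g) Q x)
        (fun α => f (Q x + α) - f (Q x))]
      rw [if_pos (mem_univ _)]
      show f (Q (T g x)) - f (Q x) = f (Q x + (Q (T g x) - Q x)) - f (Q x)
      rw [add_comm, sub_add_cancel]
    rw [key]
    apply Pl_sum
    intro α _
    -- u = δ_α ∘ (addDeriv (T g) Q), v = (Δ_α f) ∘ Q
    have hu : Pl T E (cdeg D0 (d + 1) D0)
        (fun x => (fun y : A => if y = α then (1 : B) else 0) (addDeriv (T g) Q x)) :=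
      comp_poly T E hTadd hE D0 hD0 (d + 1) D0 (fun y : A => if y = α then (1 : B) else 0)
        (addDeriv (T g) Q) (hD0 _) (Pl_deriv hQ g)
    have hv : Pl T E (cdeg D0 (d + 2) D)
        (fun x => (addDeriv ((fun (α : A) (y : A) => y + α) α) f) (Q x)) :=
      comp_poly T E hTadd hE D0 hD0 (d + 2) D
        (addDeriv ((fun (α : A) (y : A) => y + α) α) f) Q
        (Pl_deriv hf α) hQ
    have h1 : 1 ≤ cdeg D0 (d + 1) D0 := cdeg_pos _ _ _
    have h2 : 1 ≤ cdeg D0 (d + 2) D := cdeg_pos _ _ _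
    obtain ⟨s, hs⟩ : ∃ s, cdeg D0 (d + 1) D0 = s + 1 := ⟨cdeg D0 (d + 1) D0 - 1, by omega⟩
    obtain ⟨t, ht⟩ : ∃ t, cdeg D0 (d + 2) D = t + 1 := ⟨cdeg D0 (d + 2) D - 1, by omega⟩
    rw [hs] at hu
    rw [ht] at hv
    have hmul := Pl_mul hTadd hE s t _ _ hu hv
    have := Pl_mono hTadd hE hmul
      (show s + t + 1 ≤ cdeg D0 (d + 1) D0 + cdeg D0 (d + 2) D by omega)
    exact this
  termination_by d D => (d, D)

end Comp

end DigitPoly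

/-- The `j`-th digit map in base `p`: `b_j(x)` is the `j`-th base-`p` digit of `x`,
viewed in `ℤ/p^lℤ` via the embedding `{0,1,…,p−1} ⊆ ℤ/p^lℤ`. -/
def digitMap (p l : ℕ) {m : ℕ} (j : ℕ) (x : ZMod (p ^ m)) : ZMod (p ^ l) :=
  (((x.val / p ^ j) % p : ℕ) : ZMod (p ^ l))

open DigitPoly in
/-- If `P : X → ℤ/p^mℤ` is an additive polynomial of degree `< d` with respect to a
measure-preserving action of an abelian group, then each digit map `b_j ∘ P` (valued in
`ℤ/p^lℤ`) is a polynomial of degree `< C`, where `C` depends only on `l, d, p, j`. -/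
theorem digit_of_polynomial_is_polynomial
    (p l d j : ℕ) (hp : p.Prime) (hl : 1 ≤ l) :
    ∃ C : ℕ, ∀ (m : ℕ), 1 ≤ m → j ≤ m - 1 →
      ∀ (X : Type) (_ : MeasurableSpace X) (μ : Measure X)
        (Γ : Type) (_ : AddCommGroup Γ) (T : Γ → X → X),
        (∀ g : Γ, MeasurePreserving (T g) μ μ) →
        (T 0 = id) → (∀ g h : Γ, T (g + h) = T g ∘ T h) →
        ∀ P : X → ZMod (p ^ m),
          (∀ a : Fin d → Γ, ∀ᵐ x ∂μ, (((List.ofFn a).map T).foldr addDeriv P) x = 0) →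
          (∀ a : Fin C → Γ, ∀ᵐ x ∂μ,
            (((List.ofFn a).map T).foldr addDeriv (fun x => digitMap p l j (P x))) x
              = 0) := by
  classical
  set D0 : ℕ := p ^ (j + 1) * (p ^ (j + 1) * l) + 1 with hD0def
  refine ⟨cdeg D0 d D0, ?_⟩
  intro m hm hj X mX μ Γ instΓ T hTmp hT0 hTadd P hP
  set C : ℕ := cdeg D0 d D0 with hCdef
  intro a
  haveI : NeZero (p ^ m) := ⟨pow_ne_zero _ hp.ne_zero⟩
  haveI : NeZero (p ^ (j + 1)) := ⟨pow_ne_zero _ hp.ne_zero⟩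
  have hdvd : p ^ (j + 1) ∣ p ^ m := pow_dvd_pow p (by omega)
  -- parametrize the group generated by the shifts by ℤ^C
  set φ : (Fin C → ℤ) → Γ := fun ν => ∑ i, ν i • a i with hφdef
  have hφadd : ∀ ν κ, φ (ν + κ) = φ ν + φ κ := by
    intro ν κ
    rw [hφdef]
    simp only [Pi.add_apply, add_smul]
    rw [Finset.sum_add_distrib]
  set T' : (Fin C → ℤ) → X → X := fun ν => T (φ ν) with hT'def
  have hT'add : ∀ ν κ, T' (ν + κ) = T' ν ∘ T' κ := by
    intro ν κ
    show T (φ (ν + κ)) = T (φ ν) ∘ T (φ κ)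
    rw [hφadd, hTadd]
  -- the good set
  have hEae : ∀ᵐ x ∂μ, ∀ (ν : Fin C → ℤ) (h : Fin d → Fin C → ℤ),
      DL T' (List.ofFn h) P (T' ν x) = 0 := by
    rw [MeasureTheory.ae_all_iff]
    intro ν
    rw [MeasureTheory.ae_all_iff]
    intro h
    have hbase : ∀ᵐ x ∂μ, DL T' (List.ofFn h) P x = 0 := by
      have h0 := hP (fun i => φ (h i))
      have hlist : ((List.ofFn fun i => φ (h i)).map T) = (List.ofFn h).map T' := by
        rw [List.map_ofFn, List.map_ofFn]
        rfl
      refine h0.mono fun x hx => ?_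
      rw [← foldr_map_eq_DL, ← hlist]
      exact hx
    have hnull : μ {x | ¬ DL T' (List.ofFn h) P x = 0} = 0 := MeasureTheory.ae_iff.mp hbase
    have hpre := ((hTmp (φ ν)).quasiMeasurePreserving).preimage_null hnull
    rw [MeasureTheory.ae_iff]
    exact hpre
  set E : Set X := {x | ∀ (ν : Fin C → ℤ) (h : Fin d → Fin C → ℤ),
      DL T' (List.ofFn h) P (T' ν x) = 0} with hEdef
  have hE : ∀ (ν : Fin C → ℤ) (x : X), x ∈ E → T' ν x ∈ E := by
    intro ν x hx κ h
    have h1 : T' κ (T' ν x) = T' (κ + ν) x := by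
      rw [hT'add κ ν]
      rfl
    rw [h1]
    exact hx (κ + ν) h
  have hP' : Pl T' E d P := by
    intro lst hlen x hx
    have hofn : List.ofFn (fun i : Fin d => lst.get (Fin.cast hlen.symm i)) = lst := by
      apply List.ext_get (by simp [hlen])
      intro i h1 h2
      rw [List.get_ofFn]
      rfl
    have hx0 := hx 0 (fun i : Fin d => lst.get (Fin.cast hlen.symm i))
    rw [hofn] at hx0
    have h0 : T' (0 : Fin C → ℤ) x = x := by
      show T (φ 0) x = x
      have hφ0 : φ 0 = 0 := by
        rw [hφdef]
        simp
      rw [hφ0, hT0]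
      rfl
    rwa [h0] at hx0
  set Q : X → ZMod (p ^ (j + 1)) :=
    fun x => ZMod.castHom hdvd (ZMod (p ^ (j + 1))) (P x) with hQdef
  have hQ : Pl T' E d Q := by
    intro lst hlen x hx
    have h2 := congrFun (DL_hom T' lst
      (fun z => ZMod.castHom hdvd (ZMod (p ^ (j + 1))) z)
      (fun a b => RingHom.map_sub _ a b) P) x
    rw [hQdef, h2, hP' lst hlen x hx, RingHom.map_zero]
  set f₀ : ZMod (p ^ (j + 1)) → ZMod (p ^ l) :=
    fun y => (((y.val / p ^ j) % p : ℕ) : ZMod (p ^ l)) with hf₀def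
  have hdigit : ∀ z : ZMod (p ^ m), digitMap p l j z
      = f₀ (ZMod.castHom hdvd (ZMod (p ^ (j + 1))) z) := by
    intro z
    rw [digitMap, hf₀def]
    congr 1
    have hval : (ZMod.castHom hdvd (ZMod (p ^ (j + 1))) z).val = z.val % p ^ (j + 1) := by
      rw [ZMod.castHom_apply, ← ZMod.natCast_val, ZMod.val_natCast]
    rw [hval, show p ^ (j + 1) = p ^ j * p from pow_succ p j]
    rw [← Nat.mod_mul_right_div_self z.val (p ^ j) p]
    have hlt : z.val % (p ^ j * p) / p ^ j < p := by
      have hpos : 0 < p ^ j * p := Nat.mul_pos (pow_pos hp.pos j) hp.pos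
      have hmod : z.val % (p ^ j * p) < p ^ j * p := Nat.mod_lt _ hpos
      rw [Nat.div_lt_iff_lt_mul (pow_pos hp.pos j)]
      calc z.val % (p ^ j * p) < p ^ j * p := hmod
        _ = p * p ^ j := mul_comm _ _
    rw [Nat.mod_eq_of_lt hlt]
  have hdig_eq : (fun x => digitMap p l j (P x)) = fun x => f₀ (Q x) := by
    funext x
    rw [hdigit (P x), hQdef]
  have hcomp : Pl T' E C (fun x => f₀ (Q x)) :=
    comp_poly T' E hT'add hE D0 (fun f => funcs_bounded p hp (j + 1) l f) d D0 f₀ Q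
      (funcs_bounded p hp (j + 1) l f₀) hQ
  refine hEae.mono fun x hx => ?_
  rw [hdig_eq]
  have hlist2 : (List.ofFn a).map T
      = (List.ofFn (fun i : Fin C => Pi.single i (1 : ℤ))).map T' := by
    rw [List.map_ofFn, List.map_ofFn]
    congr 1
    funext i
    show T (a i) = T (φ (Pi.single i 1))
    have hφi : φ (Pi.single i (1 : ℤ)) = a i := by
      rw [hφdef]
      simp [Pi.single_apply, ite_smul]
    rw [hφi]
  rw [hlist2, foldr_map_eq_DL]
  exact hcomp (List.ofFn _) (by simp) x hx
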